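/- For integers n ≥ 3 and 1 ≤ ℓ ≤ n−2: ∑_{k=ℓ+2}^n (n−ℓ−2)! / (k·ℓ·C(n,k)·C(k−2,ℓ)·(n−k)!·(k−ℓ−2)!) = (n+ℓ)(n−ℓ−1) / (2·ℓ·(ℓ+1)·(ℓ+2)·C(n,ℓ+2)), where C(a,b) denotes the binomial coefficient. -/

import Mathlib

lemma term_nat (n ℓ m : ℕ) (hl : ℓ ≤ m) (hm : m + 2 ≤ n) :
    Nat.factorial ℓ * (m + 1) *
      ((m + 2) * ℓ * n.choose (m + 2) * m.choose ℓ * (n - (m + 2)).factorial *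
        (m - ℓ).factorial) = ℓ * n.factorial := by
  have hA := Nat.choose_mul_factorial_mul_factorial hl
  have hB := Nat.choose_mul_factorial_mul_factorial hm
  have hf : (m + 2).factorial = (m + 2) * ((m + 1) * m.factorial) := by
    rw [Nat.factorial_succ, Nat.factorial_succ]
  rw [hf] at hB
  zify at hA hB ⊢
  linear_combination (ℓ : ℤ) * (m + 2) * (m + 1) * (n.choose (m + 2)) *
      ((n - (m + 2)).factorial) * hA + (ℓ : ℤ) * hB

lemma sum_aux (ℓ : ℕ) : ∀ n : ℕ, ℓ + 2 ≤ n → ∑ k ∈ Finset.Icc (ℓ + 2) n, ((k : ℚ) - 1)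
    = ((n : ℚ) + ℓ) * ((n : ℚ) - ℓ - 1) / 2 := by
  intro n hn
  induction n, hn using Nat.le_induction with
  | base => rw [Finset.Icc_self, Finset.sum_singleton]; push_cast; ring
  | succ N hN ih =>
    rw [Finset.sum_Icc_succ_top (by omega), ih]
    push_cast
    ring

/-- The combinatorial identity used in the proof of Theorem 9. -/
theorem stmt_8 (n ℓ : ℕ) (hn : 3 ≤ n) (hl1 : 1 ≤ ℓ) (hl2 : ℓ ≤ n - 2) :
    ∑ k ∈ Finset.Icc (ℓ + 2) n,
      ((n - ℓ - 2).factorial : ℚ) /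
        ((k : ℚ) * (ℓ : ℚ) * (n.choose k : ℚ) * ((k - 2).choose ℓ : ℚ) *
          ((n - k).factorial : ℚ) * ((k - ℓ - 2).factorial : ℚ))
    = ((n : ℚ) + ℓ) * ((n : ℚ) - ℓ - 1) /
        (2 * (ℓ : ℚ) * ((ℓ : ℚ) + 1) * ((ℓ : ℚ) + 2) * (n.choose (ℓ + 2) : ℚ)) := by
  have hln : ℓ + 2 ≤ n := by omega
  have hl0 : (ℓ : ℚ) ≠ 0 := by positivity
  have hnf : (n.factorial : ℚ) ≠ 0 := by positivity
  have hchpos : 0 < n.choose (ℓ + 2) := Nat.choose_pos hln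
  have hch : (n.choose (ℓ + 2) : ℚ) ≠ 0 := by exact_mod_cast hchpos.ne'
  -- step 1: each term equals c * (k - 1)
  have hterm : ∀ k ∈ Finset.Icc (ℓ + 2) n,
      ((n - ℓ - 2).factorial : ℚ) /
        ((k : ℚ) * (ℓ : ℚ) * (n.choose k : ℚ) * ((k - 2).choose ℓ : ℚ) *
          ((n - k).factorial : ℚ) * ((k - ℓ - 2).factorial : ℚ))
      = ((n - ℓ - 2).factorial : ℚ) * (ℓ.factorial : ℚ) / ((ℓ : ℚ) * n.factorial)
          * ((k : ℚ) - 1) := by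
    intro k hk
    simp only [Finset.mem_Icc] at hk
    obtain ⟨m, rfl⟩ : ∃ m, k = m + 2 := ⟨k - 2, by omega⟩
    have hl : ℓ ≤ m := by omega
    have hm : m + 2 ≤ n := hk.2
    have h2 : m + 2 - 2 = m := by omega
    have h3 : m + 2 - ℓ - 2 = m - ℓ := by omega
    rw [h2, h3]
    have hkey := term_nat n ℓ m hl hm
    have hkeyQ : (ℓ.factorial : ℚ) * (m + 1) *
        ((m + 2 : ℕ) * ℓ * (n.choose (m + 2)) * (m.choose ℓ) *
          ((n - (m + 2)).factorial) * ((m - ℓ).factorial) : ℚ)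
        = (ℓ : ℚ) * n.factorial := by exact_mod_cast hkey
    have hd1 : ((m + 2 : ℕ) : ℚ) * ℓ * (n.choose (m + 2)) * (m.choose ℓ) *
        ((n - (m + 2)).factorial) * ((m - ℓ).factorial) ≠ 0 := by
      have h1 : 0 < n.choose (m + 2) := Nat.choose_pos hm
      have h2 : 0 < m.choose ℓ := Nat.choose_pos hl
      have h3 : (0:ℚ) < n.choose (m + 2) := by exact_mod_cast h1
      have h4 : (0:ℚ) < m.choose ℓ := by exact_mod_cast h2
      positivity
    rw [div_eq_iff hd1, div_mul_eq_mul_div, div_mul_eq_mul_div,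
      eq_div_iff (by exact mul_ne_zero hl0 hnf)]
    push_cast at hkeyQ ⊢
    nlinarith [hkeyQ]
  rw [Finset.sum_congr rfl hterm, ← Finset.mul_sum]
  -- step 2: compute the sum of (k - 1)
  have hsum := sum_aux ℓ n hln
  rw [hsum]
  -- step 3: algebra
  have hfact := Nat.choose_mul_factorial_mul_factorial hln
  have hsub : n - (ℓ + 2) = n - ℓ - 2 := by omega
  rw [hsub] at hfact
  have hfactQ : (n.choose (ℓ + 2) : ℚ) * (ℓ + 2).factorial * (n - ℓ - 2).factorial
      = n.factorial := by exact_mod_cast hfact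
  have hfl2 : ((ℓ + 2).factorial : ℚ) = ((ℓ : ℚ) + 2) * ((ℓ : ℚ) + 1) * ℓ.factorial := by
    rw [Nat.factorial_succ, Nat.factorial_succ]
    push_cast
    ring
  rw [hfl2] at hfactQ
  have hlf : (ℓ.factorial : ℚ) ≠ 0 := by positivity
  field_simp
  linear_combination ((n : ℚ) - ℓ - 1) * hfactQ
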